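/- The minimum Hamming distance of the F_2-linear code S = span(M_a') in F_2^a is exactly 3 (assuming M_a is nonempty, i.e., a ≥ 3). -/

import Mathlib

open scoped Classical

noncomputable section

/-- `b = ⌊log₂ a⌋ + 1`. -/
def bb (a : ℕ) : ℕ := Nat.log 2 a + 1

/-- `m = 2^b - a - 1`. -/
def mm (a : ℕ) : ℕ := 2 ^ bb a - a - 1

/-- `q = a - 2^(b-1)`. -/
def qq (a : ℕ) : ℕ := a - 2 ^ (bb a - 1)

/-- `M_a = {x : 0 < x ≤ a, x is not a power of 2}`. -/
def Ma (a : ℕ) : Set ℕ := {x | 0 < x ∧ x ≤ a ∧ ¬ ∃ k, x = 2 ^ k}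

/-- `g(x) = 2x` if bit `b-1` of `x` is `0`, else `g(x) = 2x + 1 - 2^b`. -/
def gg (a x : ℕ) : ℕ := if x.testBit (bb a - 1) then 2 * x + 1 - 2 ^ bb a else 2 * x

/-- `f'(x) = x` if `x ∈ M_a`, else `f'(x) = x + 1 - 2⌈m/2⌉` (intended domain `g(M_a)`). -/
def ff' (a x : ℕ) : ℕ := if x ∈ Ma a then x else x + 1 - 2 * ((mm a + 1) / 2)

/-- `f = f' ∘ g`. -/
def ff (a x : ℕ) : ℕ := ff' a (gg a x)

/-- the `j`-th binary digit of `x`, as a natural number. -/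
def bitv (x j : ℕ) : ℕ := if x.testBit j then 1 else 0

/-- `h(x) = 2^(f(x)-1) + Σ_{j=0}^{b-2} x_j 2^(2^(j+1)-1) + x_{b-1}`. -/
def hh (a x : ℕ) : ℕ :=
  2 ^ (ff a x - 1) + (∑ j ∈ Finset.range (bb a - 1), bitv x j * 2 ^ (2 ^ (j + 1) - 1)) +
    bitv x (bb a - 1)

/-- Hamming weight of `x` viewed as a vector in `F_2^a`. -/
def wt (a x : ℕ) : ℕ := ((Finset.range a).filter (fun j => x.testBit j)).card

/-- identification of `Z_{2^a}` with `F_2^a` via radix-2 representation. -/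
def toVec (a x : ℕ) : Fin a → ZMod 2 := fun j => if x.testBit (j : ℕ) then 1 else 0

/-- `S`, the `F_2`-span of `M_a' = h(M_a)` inside `F_2^a`. -/
def Ssub (a : ℕ) : Submodule (ZMod 2) (Fin a → ZMod 2) :=
  Submodule.span (ZMod 2) (toVec a '' (hh a '' Ma a))

/-- `P_a = {0, 2^0, 2^1, …, 2^(a-1)}`. -/
def Pa (a : ℕ) : Set ℕ := {0} ∪ {y | ∃ j < a, y = 2 ^ j}

/-- `Q_a = ∅` if `a+1` is a power of `2`, else `{1 ⊕ 2^j : a-m ≤ j ≤ a-1}`. -/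
def Qa (a : ℕ) : Set ℕ :=
  if ∃ k, a + 1 = 2 ^ k then ∅ else {y | ∃ j, a - mm a ≤ j ∧ j < a ∧ y = 1 ^^^ 2 ^ j}

/-- `T_a = P_a ∪ Q_a`. -/
def Ta (a : ℕ) : Set ℕ := Pa a ∪ Qa a

end

section AuxMinDist

variable {a x y : ℕ}

lemma two_le_bb (ha : 3 ≤ a) : 2 ≤ bb a := by
  have : 1 ≤ Nat.log 2 a := Nat.le_log_of_pow_le (by norm_num) (by omega)
  simp only [bb]; omega

lemma pow_bb_pred_le (ha : 3 ≤ a) : 2 ^ (bb a - 1) ≤ a := by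
  have : bb a - 1 = Nat.log 2 a := by simp [bb]
  rw [this]
  exact Nat.pow_log_le_self 2 (by omega)

lemma lt_pow_bb (ha : 3 ≤ a) : a < 2 ^ bb a :=
  Nat.lt_pow_succ_log_self (by norm_num) a

lemma pow_bb_eq (ha : 3 ≤ a) : 2 ^ bb a = 2 * 2 ^ (bb a - 1) := by
  have h := two_le_bb ha
  conv_lhs => rw [show bb a = (bb a - 1) + 1 by omega]
  rw [pow_succ]; ring

lemma testBit_top (ha : 3 ≤ a) (hx : x < 2 ^ bb a) :
    x.testBit (bb a - 1) = decide (2 ^ (bb a - 1) ≤ x) := by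
  have hp : 0 < 2 ^ (bb a - 1) := Nat.pow_pos (by norm_num)
  have h2 := pow_bb_eq ha
  rw [Nat.testBit_eq_decide_div_mod_eq]
  rcases Nat.lt_or_ge x (2 ^ (bb a - 1)) with h | h
  · simp [Nat.div_eq_of_lt h, Nat.not_le.2 h]
  · have hd : x / 2 ^ (bb a - 1) < 2 := (Nat.div_lt_iff_lt_mul hp).2 (by omega)
    have hd1 : 1 ≤ x / 2 ^ (bb a - 1) := (Nat.le_div_iff_mul_le hp).2 (by omega)
    have : x / 2 ^ (bb a - 1) = 1 := by omega
    simp [this, h]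

lemma three_le_of_mem (hx : x ∈ Ma a) : 3 ≤ x := by
  obtain ⟨h0, _, hp⟩ := hx
  by_contra h
  interval_cases x
  · exact hp ⟨0, rfl⟩
  · exact hp ⟨1, rfl⟩

lemma odd_mem_Ma (h1 : x % 2 = 1) (h3 : 3 ≤ x) (hxa : x ≤ a) : x ∈ Ma a := by
  refine ⟨by omega, hxa, ?_⟩
  rintro ⟨k, rfl⟩
  rcases k with _ | k
  · omega
  · rw [pow_succ] at h1; omega

lemma mm_add (ha : 3 ≤ a) : mm a + a + 1 = 2 ^ bb a := by
  have := lt_pow_bb ha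
  simp only [mm]; omega

lemma ff_cases (ha : 3 ≤ a) (hx : x ∈ Ma a) :
    ff a x ∈ Ma a ∧
    ((2 ^ (bb a - 1) ≤ x ∧ ff a x = 2 * x + 1 - 2 ^ bb a) ∨
     (2 * x ≤ a ∧ ff a x = 2 * x) ∨
     (x < 2 ^ (bb a - 1) ∧ a < 2 * x ∧ ff a x = 2 * x + 1 - 2 * ((mm a + 1) / 2))) := by
  obtain ⟨hx0, hxa, hxp⟩ := hx
  have h1 := pow_bb_pred_le ha
  have h2 := pow_bb_eq ha
  have h3 := lt_pow_bb ha
  have hxb : x < 2 ^ bb a := lt_of_le_of_lt hxa h3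
  have htop := testBit_top ha hxb
  unfold ff gg
  by_cases h : 2 ^ (bb a - 1) ≤ x
  · rw [show (if x.testBit (bb a - 1) = true then 2 * x + 1 - 2 ^ bb a else 2 * x) =
        2 * x + 1 - 2 ^ bb a by rw [htop]; simp [h]]
    have hne : x ≠ 2 ^ (bb a - 1) := fun hc => hxp ⟨_, hc⟩
    have hmem : 2 * x + 1 - 2 ^ bb a ∈ Ma a := odd_mem_Ma (by omega) (by omega) (by omega)
    rw [ff', if_pos hmem]
    exact ⟨hmem, Or.inl ⟨h, rfl⟩⟩
  · rw [show (if x.testBit (bb a - 1) = true then 2 * x + 1 - 2 ^ bb a else 2 * x) =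
        2 * x by rw [htop]; simp [h]]
    push_neg at h
    by_cases h2x : 2 * x ≤ a
    · have hmem : 2 * x ∈ Ma a := by
        refine ⟨by omega, h2x, ?_⟩
        rintro ⟨k, hk⟩
        rcases k with _ | k
        · omega
        · rw [pow_succ] at hk
          exact hxp ⟨k, by omega⟩
      rw [ff', if_pos hmem]
      exact ⟨hmem, Or.inr (Or.inl ⟨h2x, rfl⟩)⟩
    · have hnm : 2 * x ∉ Ma a := fun hc => h2x hc.2.1
      rw [ff', if_neg hnm]
      have hm := mm_add ha
      have hmem : 2 * x + 1 - 2 * ((mm a + 1) / 2) ∈ Ma a :=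
        odd_mem_Ma (by omega) (by omega) (by omega)
      exact ⟨hmem, Or.inr (Or.inr ⟨h, by omega, rfl⟩)⟩

lemma ff_mem (ha : 3 ≤ a) (hx : x ∈ Ma a) : ff a x ∈ Ma a := (ff_cases ha hx).1

lemma ff_inj (ha : 3 ≤ a) (hx : x ∈ Ma a) (hy : y ∈ Ma a) (h : ff a x = ff a y) : x = y := by
  have h1 := pow_bb_pred_le ha
  have h2 := pow_bb_eq ha
  have h3 := lt_pow_bb ha
  have hm := mm_add ha
  have hxa := hx.2.1
  have hya := hy.2.1
  rcases (ff_cases ha hx).2 with ⟨c1, e1⟩ | ⟨c1, e1⟩ | ⟨c1, c1', e1⟩ <;>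
    rcases (ff_cases ha hy).2 with ⟨c2, e2⟩ | ⟨c2, e2⟩ | ⟨c2, c2', e2⟩ <;>
      omega


lemma sum_range_two_pow (N : ℕ) : ∑ p ∈ Finset.range N, 2 ^ p = 2 ^ N - 1 := by
  induction N with
  | zero => simp
  | succ n ih =>
    rw [Finset.sum_range_succ, ih, pow_succ]
    have := Nat.two_pow_pos n
    omega

lemma sum_two_pow_lt {E : Finset ℕ} {N : ℕ} (h : ∀ p ∈ E, p < N) : ∑ p ∈ E, 2 ^ p < 2 ^ N := by
  calc ∑ p ∈ E, 2 ^ p ≤ ∑ p ∈ Finset.range N, 2 ^ p :=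
        Finset.sum_le_sum_of_subset (fun p hp => Finset.mem_range.2 (h p hp))
    _ < 2 ^ N := by
        rw [sum_range_two_pow]
        have := Nat.two_pow_pos N
        omega

lemma testBit_sum_two_pow (E : Finset ℕ) (q : ℕ) :
    (∑ p ∈ E, 2 ^ p).testBit q = true ↔ q ∈ E := by
  induction E using Finset.induction_on_max with
  | empty => simp
  | insert p E hE ih =>
    have hpE : p ∉ E := fun h => absurd (hE p h) (lt_irrefl p)
    rw [Finset.sum_insert hpE]
    have hlt : ∑ r ∈ E, 2 ^ r < 2 ^ p := sum_two_pow_lt hE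
    have key := Nat.testBit_two_pow_mul_add 1 hlt q
    rw [mul_one] at key
    rw [key]
    by_cases hq : q < p
    · have hne : q ≠ p := by omega
      simp [hq, ih, hne]
    · simp only [hq, if_false, Finset.mem_insert]
      rw [Nat.testBit_one_eq_true_iff_self_eq_zero]
      constructor
      · intro h; left; omega
      · rintro (rfl | h)
        · omega
        · exact absurd (hE q h) hq

/-- the set of binary digits of `h(x)`. -/
noncomputable def EE (a x : ℕ) : Finset ℕ :=
  insert (ff a x - 1)
    ((((Finset.range (bb a - 1)).filter (fun j => x.testBit j = true)).image
        (fun j => 2 ^ (j + 1) - 1)) ∪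
      (if x.testBit (bb a - 1) = true then ({0} : Finset ℕ) else ∅))

lemma mem_EE {a x : ℕ} (p : ℕ) :
    p ∈ EE a x ↔ p = ff a x - 1 ∨
      (∃ j < bb a - 1, x.testBit j = true ∧ p = 2 ^ (j + 1) - 1) ∨
      (p = 0 ∧ x.testBit (bb a - 1) = true) := by
  by_cases hb : x.testBit (bb a - 1) = true <;>
    simp [EE, hb, Finset.mem_insert, Finset.mem_union, Finset.mem_image, Finset.mem_filter,
      Finset.mem_range] <;> aesop

lemma hh_eq_sum {a x : ℕ} (ha : 3 ≤ a) (hx : x ∈ Ma a) : hh a x = ∑ p ∈ EE a x, 2 ^ p := by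
  have hf := ff_mem ha hx
  have hf3 := three_le_of_mem hf
  have hfp := hf.2.2
  have hmid : (∑ j ∈ Finset.range (bb a - 1), bitv x j * 2 ^ (2 ^ (j + 1) - 1)) =
      ∑ p ∈ ((Finset.range (bb a - 1)).filter (fun j => x.testBit j = true)).image
          (fun j => 2 ^ (j + 1) - 1), 2 ^ p := by
    rw [Finset.sum_image]
    · rw [Finset.sum_filter]
      apply Finset.sum_congr rfl
      intro j _
      by_cases hbj : x.testBit j = true <;> simp [bitv, hbj]
    · intro i _ j _ hij
      have h1 : (0:ℕ) < 2 ^ (i + 1) := Nat.two_pow_pos _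
      have h2 : (0:ℕ) < 2 ^ (j + 1) := Nat.two_pow_pos _
      have hpe : 2 ^ (i + 1) = 2 ^ (j + 1) := by beta_reduce at hij; omega
      have := Nat.pow_right_injective (le_refl 2) hpe
      omega
  have hlast : (bitv x (bb a - 1) : ℕ) =
      ∑ p ∈ (if x.testBit (bb a - 1) = true then ({0} : Finset ℕ) else ∅), 2 ^ p := by
    by_cases hb : x.testBit (bb a - 1) = true <;> simp [bitv, hb]
  have hd1 : Disjoint
      (((Finset.range (bb a - 1)).filter (fun j => x.testBit j = true)).image
        (fun j => 2 ^ (j + 1) - 1))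
      (if x.testBit (bb a - 1) = true then ({0} : Finset ℕ) else ∅) := by
    rw [Finset.disjoint_left]
    intro p hp hp'
    simp only [Finset.mem_image, Finset.mem_filter] at hp
    obtain ⟨j, _, rfl⟩ := hp
    have := Nat.two_pow_pos (j + 1)
    have hp0 : (2:ℕ) ^ (j + 1) - 1 ≠ 0 := by
      have : (2:ℕ) ≤ 2 ^ (j + 1) := Nat.one_lt_two_pow_iff.2 (by omega)
      omega
    by_cases hb : x.testBit (bb a - 1) = true <;> simp [hb] at hp' <;> exact hp0 hp'
  have hni : ff a x - 1 ∉
      ((((Finset.range (bb a - 1)).filter (fun j => x.testBit j = true)).image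
        (fun j => 2 ^ (j + 1) - 1)) ∪
      (if x.testBit (bb a - 1) = true then ({0} : Finset ℕ) else ∅)) := by
    intro hmem
    rcases Finset.mem_union.1 hmem with hmem | hmem
    · simp only [Finset.mem_image, Finset.mem_filter] at hmem
      obtain ⟨j, _, hj⟩ := hmem
      have := Nat.two_pow_pos (j + 1)
      exact hfp ⟨j + 1, by omega⟩
    · by_cases hb : x.testBit (bb a - 1) = true <;> simp [hb] at hmem
      omega
  rw [hh, hmid, hlast, EE, Finset.sum_insert hni, Finset.sum_union hd1, add_assoc]

lemma hh_testBit {a x : ℕ} (ha : 3 ≤ a) (hx : x ∈ Ma a) (p : ℕ) :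
    (hh a x).testBit p = true ↔ p ∈ EE a x := by
  rw [hh_eq_sum ha hx]; exact testBit_sum_two_pow _ _

lemma EE_lt {a x : ℕ} (ha : 3 ≤ a) (hx : x ∈ Ma a) : ∀ p ∈ EE a x, p < a := by
  intro p hp
  have hf := ff_mem ha hx
  have hf3 := three_le_of_mem hf
  have hfa := hf.2.1
  rcases (mem_EE p).1 hp with rfl | ⟨j, hj, _, rfl⟩ | ⟨rfl, _⟩
  · omega
  · have h1 := pow_bb_pred_le ha
    have h2 : (2:ℕ) ^ (j + 1) ≤ 2 ^ (bb a - 1) := Nat.pow_le_pow_right (by norm_num) (by omega)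
    have := Nat.two_pow_pos (j + 1)
    omega
  · omega

/-- position in `h(x)` encoding bit `j` of `x`. -/
def spos (a j : ℕ) : ℕ := if j < bb a - 1 then 2 ^ (j + 1) - 1 else 0

lemma spos_lt {a j : ℕ} (ha : 3 ≤ a) (hj : j < bb a) : spos a j < a := by
  unfold spos
  split
  · have h1 := pow_bb_pred_le ha
    have h2 : (2:ℕ) ^ (j + 1) ≤ 2 ^ (bb a - 1) := Nat.pow_le_pow_right (by norm_num) (by omega)
    have := Nat.two_pow_pos (j + 1)
    omega
  · omega

lemma spos_inj {a j1 j2 : ℕ} (hj1 : j1 < bb a) (hj2 : j2 < bb a) (h : spos a j1 = spos a j2) :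
    j1 = j2 := by
  unfold spos at h
  have e1 : (2:ℕ) ≤ 2 ^ (j1 + 1) := Nat.one_lt_two_pow_iff.2 (by omega)
  have e2 : (2:ℕ) ≤ 2 ^ (j2 + 1) := Nat.one_lt_two_pow_iff.2 (by omega)
  split at h <;> split at h
  · have hpe : (2:ℕ) ^ (j1 + 1) = 2 ^ (j2 + 1) := by omega
    have := Nat.pow_right_injective (le_refl 2) hpe
    omega
  · omega
  · omega
  · omega

lemma spos_ne_fpos {a x j : ℕ} (ha : 3 ≤ a) (hx : x ∈ Ma a) : spos a j ≠ ff a x - 1 := by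
  have hf := ff_mem ha hx
  have hf3 := three_le_of_mem hf
  have hfp := hf.2.2
  unfold spos
  split
  · intro h
    have := Nat.two_pow_pos (j + 1)
    exact hfp ⟨j + 1, by omega⟩
  · omega

lemma hh_testBit_spos {a x j : ℕ} (ha : 3 ≤ a) (hx : x ∈ Ma a) (hj : j < bb a) :
    (hh a x).testBit (spos a j) = x.testBit j := by
  have hf := ff_mem ha hx
  have hf3 := three_le_of_mem hf
  have hfp := hf.2.2
  have hmem : (hh a x).testBit (spos a j) = true ↔ spos a j ∈ EE a x := hh_testBit ha hx _
  have hiff : spos a j ∈ EE a x ↔ x.testBit j = true := by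
    rw [mem_EE]
    unfold spos
    split
    · rename_i hlt
      constructor
      · rintro (h | ⟨j', hj', hbit, h⟩ | ⟨h, _⟩)
        · exfalso
          have := Nat.two_pow_pos (j + 1)
          exact hfp ⟨j + 1, by omega⟩
        · have e1 := Nat.two_pow_pos (j + 1)
          have e2 := Nat.two_pow_pos (j' + 1)
          have hpe : (2:ℕ) ^ (j + 1) = 2 ^ (j' + 1) := by omega
          have hjj := Nat.pow_right_injective (le_refl 2) hpe
          have hje : j = j' := by omega
          rwa [hje]
        · exfalso
          have := Nat.one_lt_two_pow_iff.2 (show j + 1 ≠ 0 by omega)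
          omega
      · intro hbit
        exact Or.inr (Or.inl ⟨j, hlt, hbit, rfl⟩)
    · rename_i hge
      have hjeq : j = bb a - 1 := by omega
      constructor
      · rintro (h | ⟨j', _, _, h⟩ | ⟨_, h⟩)
        · omega
        · exfalso
          have := Nat.one_lt_two_pow_iff.2 (show j' + 1 ≠ 0 by omega)
          omega
        · rw [hjeq]; exact h
      · intro hbit
        exact Or.inr (Or.inr ⟨rfl, by rw [← hjeq]; exact hbit⟩)
  by_cases hb : x.testBit j = true
  · rw [hb]; exact hmem.2 (hiff.2 hb)
  · have hb' : x.testBit j = false := by simpa using hb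
    rw [hb', Bool.eq_false_iff]
    intro h
    rw [hb'] at hiff
    exact absurd (hiff.1 (hmem.1 h)) (by simp)

lemma hh_testBit_fpos {a x y : ℕ} (ha : 3 ≤ a) (hx : x ∈ Ma a) (hy : y ∈ Ma a) :
    ((hh a y).testBit (ff a x - 1) = true) ↔ y = x := by
  have hfx := ff_mem ha hx
  have hfy := ff_mem ha hy
  have hfx3 := three_le_of_mem hfx
  have hfy3 := three_le_of_mem hfy
  rw [hh_testBit ha hy, mem_EE]
  constructor
  · rintro (h | ⟨j, hj, _, h⟩ | ⟨h, _⟩)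
    · exact ff_inj ha hy hx (by omega)
    · exfalso
      have := Nat.two_pow_pos (j + 1)
      exact hfx.2.2 ⟨j + 1, by omega⟩
    · omega
  · rintro rfl
    exact Or.inl rfl

lemma bit_lt_bb {a x i : ℕ} (ha : 3 ≤ a) (hxa : x ≤ a) (h : x.testBit i = true) : i < bb a := by
  have h1 := Nat.ge_two_pow_of_testBit h
  have h3 := lt_pow_bb ha
  have hlt : (2:ℕ) ^ i < 2 ^ bb a := by omega
  exact (Nat.pow_lt_pow_iff_right (by norm_num)).1 hlt

lemma exists_two_bits {a x : ℕ} (ha : 3 ≤ a) (hx : x ∈ Ma a) :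
    ∃ j1 j2, j1 ≠ j2 ∧ j1 < bb a ∧ j2 < bb a ∧ x.testBit j1 = true ∧ x.testBit j2 = true := by
  have hx3 := three_le_of_mem hx
  have hxa := hx.2.1
  have hxp := hx.2.2
  have hbit : ∃ j, x.testBit j = true := by
    by_contra h
    push_neg at h
    have : x = 0 := Nat.eq_of_testBit_eq fun i => by
      rw [Nat.zero_testBit]
      exact Bool.eq_false_iff.2 (h i)
    omega
  obtain ⟨j, hj⟩ := hbit
  have hne : x ≠ 2 ^ j := fun h => hxp ⟨j, h⟩
  have hbit2 : ∃ j', x.testBit j' ≠ (2 ^ j : ℕ).testBit j' := by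
    by_contra h
    push_neg at h
    exact hne (Nat.eq_of_testBit_eq h)
  obtain ⟨j', hj'⟩ := hbit2
  have hjj : j' ≠ j := by
    rintro rfl
    rw [Nat.testBit_two_pow_self] at hj'
    exact hj' hj
  have h2 : (2 ^ j : ℕ).testBit j' = false := Nat.testBit_two_pow_of_ne fun h => hjj h.symm
  have hj'true : x.testBit j' = true := by
    rw [h2] at hj'
    exact Bool.ne_false_iff.1 hj'
  exact ⟨j, j', fun h => hjj h.symm, bit_lt_bb ha hxa hj, bit_lt_bb ha hxa hj'true, hj, hj'true⟩

lemma hammingNorm_eq_card {a : ℕ} (v : Fin a → ZMod 2) :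
    hammingNorm v = (Finset.univ.filter fun i => v i ≠ 0).card := by
  rfl

lemma three_le_norm_aux {a : ℕ} {v : Fin a → ZMod 2} {q1 q2 q3 : Fin a}
    (h12 : q1 ≠ q2) (h13 : q1 ≠ q3) (h23 : q2 ≠ q3)
    (h1 : v q1 ≠ 0) (h2 : v q2 ≠ 0) (h3 : v q3 ≠ 0) : 3 ≤ hammingNorm v := by
  have hsub : ({q1, q2, q3} : Finset (Fin a)) ⊆ Finset.univ.filter (fun i => v i ≠ 0) := by
    intro q hq
    simp only [Finset.mem_insert, Finset.mem_singleton] at hq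
    rcases hq with rfl | rfl | rfl <;> simp [h1, h2, h3]
  have hcard : ({q1, q2, q3} : Finset (Fin a)).card = 3 := by
    rw [Finset.card_insert_of_notMem (by simp [h12, h13]),
        Finset.card_insert_of_notMem (by simp [h23]), Finset.card_singleton]
  rw [hammingNorm_eq_card]
  calc 3 = ({q1, q2, q3} : Finset (Fin a)).card := hcard.symm
    _ ≤ _ := Finset.card_le_card hsub

set_option maxHeartbeats 4000000 in
lemma norm_ge_three {a : ℕ} (ha : 3 ≤ a) (T : Finset ℕ) (hT : ∀ x ∈ T, x ∈ Ma a)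
    (hTne : T.Nonempty) : 3 ≤ hammingNorm (∑ x ∈ T, toVec a (hh a x)) := by
  set v := ∑ x ∈ T, toVec a (hh a x) with hv
  have heval : ∀ p : Fin a, v p = ∑ x ∈ T, (if (hh a x).testBit ↑p then (1 : ZMod 2) else 0) := by
    intro p
    rw [hv, Finset.sum_apply]
    rfl
  have hflt : ∀ x ∈ T, ff a x - 1 < a := by
    intro x hx
    have h1 := (ff_mem ha (hT x hx)).2.1
    have h2 := three_le_of_mem (ff_mem ha (hT x hx))
    omega
  have hfval : ∀ x (hx : x ∈ T), v ⟨ff a x - 1, hflt x hx⟩ = 1 := by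
    intro x hx
    rw [heval]
    rw [Finset.sum_eq_single_of_mem x hx]
    · simp [(hh_testBit_fpos ha (hT x hx) (hT x hx)).2 rfl]
    · intro y hy hyx
      have hfalse : (hh a y).testBit (ff a x - 1) = false := by
        rw [Bool.eq_false_iff]
        intro h
        exact hyx ((hh_testBit_fpos ha (hT x hx) (hT y hy)).1 h)
      simp [hfalse]
  have hsval : ∀ j, j < bb a → ∀ hlt : spos a j < a,
      v ⟨spos a j, hlt⟩ = ∑ x ∈ T, (if x.testBit j then (1 : ZMod 2) else 0) := by
    intro j hj hlt
    rw [heval]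
    apply Finset.sum_congr rfl
    intro x hx
    rw [hh_testBit_spos ha (hT x hx) hj]
  rcases Nat.lt_or_ge T.card 3 with hlt3 | hge3
  · have hc1 := Finset.card_pos.2 hTne
    rcases (by omega : T.card = 1 ∨ T.card = 2) with hc | hc
    · obtain ⟨x, rfl⟩ := Finset.card_eq_one.1 hc
      have hxM : x ∈ Ma a := hT x (by simp)
      obtain ⟨j1, j2, hne, hj1, hj2, hb1, hb2⟩ := exists_two_bits ha hxM
      have hxT : x ∈ ({x} : Finset ℕ) := by simp
      refine three_le_norm_aux (q1 := ⟨ff a x - 1, hflt x hxT⟩)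
        (q2 := ⟨spos a j1, spos_lt ha hj1⟩) (q3 := ⟨spos a j2, spos_lt ha hj2⟩)
        ?_ ?_ ?_ ?_ ?_ ?_
      · exact Fin.ne_of_val_ne fun h => spos_ne_fpos ha hxM h.symm
      · exact Fin.ne_of_val_ne fun h => spos_ne_fpos ha hxM h.symm
      · exact Fin.ne_of_val_ne fun h => hne (spos_inj hj1 hj2 h)
      · rw [hfval x hxT]; exact one_ne_zero
      · rw [hsval j1 hj1 (spos_lt ha hj1), Finset.sum_singleton, if_pos hb1]
        exact one_ne_zero
      · rw [hsval j2 hj2 (spos_lt ha hj2), Finset.sum_singleton, if_pos hb2]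
        exact one_ne_zero
    · obtain ⟨x, y, hxy, rfl⟩ := Finset.card_eq_two.1 hc
      have hxT : x ∈ ({x, y} : Finset ℕ) := by simp
      have hyT : y ∈ ({x, y} : Finset ℕ) := by simp
      have hxM := hT x hxT
      have hyM := hT y hyT
      have hdiff : ∃ j, j < bb a ∧ x.testBit j ≠ y.testBit j := by
        by_contra h
        push_neg at h
        apply hxy
        apply Nat.eq_of_testBit_eq
        intro i
        by_cases hi : i < bb a
        · exact h i hi
        · have h3 := lt_pow_bb ha
          have hxlt : x < 2 ^ i :=
            lt_of_le_of_lt hxM.2.1 (lt_of_lt_of_le h3 (Nat.pow_le_pow_right (by norm_num) (by omega)))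
          have hylt : y < 2 ^ i :=
            lt_of_le_of_lt hyM.2.1 (lt_of_lt_of_le h3 (Nat.pow_le_pow_right (by norm_num) (by omega)))
          rw [Nat.testBit_lt_two_pow hxlt, Nat.testBit_lt_two_pow hylt]
      obtain ⟨j, hj, hneq⟩ := hdiff
      have hfx3 := three_le_of_mem (ff_mem ha hxM)
      have hfy3 := three_le_of_mem (ff_mem ha hyM)
      refine three_le_norm_aux (q1 := ⟨ff a x - 1, hflt x hxT⟩)
        (q2 := ⟨ff a y - 1, hflt y hyT⟩) (q3 := ⟨spos a j, spos_lt ha hj⟩)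
        ?_ ?_ ?_ ?_ ?_ ?_
      · intro hq
        have h : ff a x - 1 = ff a y - 1 := congrArg Fin.val hq
        exact hxy (ff_inj ha hxM hyM (by omega))
      · exact Fin.ne_of_val_ne fun h => spos_ne_fpos ha hxM h.symm
      · exact Fin.ne_of_val_ne fun h => spos_ne_fpos ha hyM h.symm
      · rw [hfval x hxT]; exact one_ne_zero
      · rw [hfval y hyT]; exact one_ne_zero
      · rw [hsval j hj (spos_lt ha hj), Finset.sum_pair hxy]
        rcases Bool.eq_false_or_eq_true (x.testBit j) with hbx | hbx <;>
          rcases Bool.eq_false_or_eq_true (y.testBit j) with hby | hby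
        · exfalso; rw [hbx, hby] at hneq; exact hneq rfl
        · rw [hbx, hby]; norm_num
        · rw [hbx, hby]; norm_num
        · exfalso; rw [hbx, hby] at hneq; exact hneq rfl
  · obtain ⟨S, hScard, hSsub⟩ : ∃ S : Finset (Fin a), S.card = T.card ∧
        S ⊆ Finset.univ.filter (fun i => v i ≠ 0) := by
      refine ⟨T.attach.image (fun x => (⟨ff a x.1 - 1, hflt x.1 x.2⟩ : Fin a)), ?_, ?_⟩
      · rw [Finset.card_image_of_injOn, Finset.card_attach]
        intro x _ y _ hxy
        have hval : ff a x.1 - 1 = ff a y.1 - 1 := congrArg Fin.val hxy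
        have h3x := three_le_of_mem (ff_mem ha (hT x.1 x.2))
        have h3y := three_le_of_mem (ff_mem ha (hT y.1 y.2))
        exact Subtype.ext (ff_inj ha (hT x.1 x.2) (hT y.1 y.2) (by omega))
      · intro q hq
        obtain ⟨x, _, rfl⟩ := Finset.mem_image.1 hq
        simp only [Finset.mem_filter, Finset.mem_univ, true_and]
        rw [hfval x.1 x.2]
        exact one_ne_zero
    rw [hammingNorm_eq_card]
    calc 3 ≤ T.card := hge3
      _ = S.card := hScard.symm
      _ ≤ _ := Finset.card_le_card hSsub

lemma three_mem_Ma {a : ℕ} (ha : 3 ≤ a) : (3 : ℕ) ∈ Ma a := by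
  refine ⟨by norm_num, ha, ?_⟩
  rintro ⟨k, hk⟩
  rcases k with _ | _ | k
  · omega
  · omega
  · have := Nat.two_pow_pos k
    rw [pow_succ, pow_succ] at hk
    omega

lemma span_decomp {a : ℕ} {v : Fin a → ZMod 2} (hv : v ∈ Ssub a) (hvne : v ≠ 0) :
    ∃ T : Finset ℕ, (∀ x ∈ T, x ∈ Ma a) ∧ T.Nonempty ∧
      ∑ x ∈ T, toVec a (hh a x) = v := by
  rw [Ssub] at hv
  obtain ⟨c, hsupp, hsum⟩ := Submodule.mem_span_set.1 hv
  have hchoice : ∀ w ∈ c.support, ∃ x, x ∈ Ma a ∧ toVec a (hh a x) = w := by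
    intro w hw
    obtain ⟨u, ⟨x, hx, rfl⟩, rfl⟩ := hsupp hw
    exact ⟨x, hx, rfl⟩
  classical
  let φ : (Fin a → ZMod 2) → ℕ := fun w =>
    if h : ∃ x, x ∈ Ma a ∧ toVec a (hh a x) = w then h.choose else 0
  have hφ : ∀ w ∈ c.support, φ w ∈ Ma a ∧ toVec a (hh a (φ w)) = w := by
    intro w hw
    have h := hchoice w hw
    simp only [φ, dif_pos h]
    exact ⟨h.choose_spec.1, h.choose_spec.2⟩
  have hinj : ∀ w1 ∈ c.support, ∀ w2 ∈ c.support, φ w1 = φ w2 → w1 = w2 := by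
    intro w1 h1 w2 h2 he
    rw [← (hφ w1 h1).2, ← (hφ w2 h2).2, he]
  refine ⟨c.support.image φ, ?_, ?_, ?_⟩
  · intro x hx
    obtain ⟨w, hw, rfl⟩ := Finset.mem_image.1 hx
    exact (hφ w hw).1
  · rw [Finset.image_nonempty, Finset.nonempty_iff_ne_empty]
    intro hemp
    apply hvne
    rw [← hsum, Finsupp.sum, hemp, Finset.sum_empty]
  · rw [Finset.sum_image hinj, ← hsum, Finsupp.sum]
    apply Finset.sum_congr rfl
    intro w hw
    rw [(hφ w hw).2]
    have hone : c w = 1 := by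
      have hne := Finsupp.mem_support_iff.1 hw
      revert hne
      generalize c w = r
      revert r
      decide
    rw [hone, one_smul]

lemma witness_norm {a : ℕ} (ha : 3 ≤ a) :
    toVec a (hh a 3) ≠ 0 ∧ hammingNorm (toVec a (hh a 3)) = 3 := by
  have h3M := three_mem_Ma ha
  have hb2 := two_le_bb ha
  have hf := ff_mem ha h3M
  have hf3 := three_le_of_mem hf
  have hfa := hf.2.1
  have hflt : ff a 3 - 1 < a := by omega
  have hb30 : (3 : ℕ).testBit 0 = true := by decide
  have hb31 : (3 : ℕ).testBit 1 = true := by decide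
  have h0b : 0 < bb a := by omega
  have h1b : 1 < bb a := by omega
  have hbit3 : ∀ j, (3 : ℕ).testBit j = true → j < 2 := by
    intro j hj
    rw [show (3 : ℕ) = 2 ^ 2 - 1 by norm_num, Nat.testBit_two_pow_sub_one] at hj
    simpa using hj
  set q1 : Fin a := ⟨ff a 3 - 1, hflt⟩ with hq1
  set q2 : Fin a := ⟨spos a 0, spos_lt ha h0b⟩ with hq2
  set q3 : Fin a := ⟨spos a 1, spos_lt ha h1b⟩ with hq3
  have hmemq1 : (hh a 3).testBit (ff a 3 - 1) = true := (hh_testBit_fpos ha h3M h3M).2 rfl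
  have hmemq2 : (hh a 3).testBit (spos a 0) = true := by
    rw [hh_testBit_spos ha h3M h0b]; exact hb30
  have hmemq3 : (hh a 3).testBit (spos a 1) = true := by
    rw [hh_testBit_spos ha h3M h1b]; exact hb31
  have hiff : ∀ i : Fin a, toVec a (hh a 3) i ≠ 0 ↔ (i = q1 ∨ i = q2 ∨ i = q3) := by
    intro i
    have hstep : toVec a (hh a 3) i ≠ 0 ↔ (hh a 3).testBit ↑i = true := by
      by_cases h : (hh a 3).testBit ↑i = true <;> simp [toVec, h]
    rw [hstep]
    constructor
    · intro hmem
      rw [hh_testBit ha h3M, mem_EE] at hmem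
      rcases hmem with h | ⟨j, hj, hbit, h⟩ | ⟨h, hbit⟩
      · exact Or.inl (Fin.ext h)
      · have hj2 := hbit3 j hbit
        rcases (by omega : j = 0 ∨ j = 1) with rfl | rfl
        · refine Or.inr (Or.inl (Fin.ext ?_))
          show (i : ℕ) = spos a 0
          rw [spos, if_pos (by omega)]
          simpa using h
        · refine Or.inr (Or.inr (Fin.ext ?_))
          show (i : ℕ) = spos a 1
          rw [spos, if_pos hj]
          simpa using h
      · have hlt2 := hbit3 _ hbit
        refine Or.inr (Or.inr (Fin.ext ?_))
        show (i : ℕ) = spos a 1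
        rw [spos, if_neg (by omega)]
        exact h
    · rintro (rfl | rfl | rfl)
      · exact hmemq1
      · exact hmemq2
      · exact hmemq3
  have hd12 : q1 ≠ q2 := Fin.ne_of_val_ne fun h => spos_ne_fpos ha h3M h.symm
  have hd13 : q1 ≠ q3 := Fin.ne_of_val_ne fun h => spos_ne_fpos ha h3M h.symm
  have hd23 : q2 ≠ q3 := Fin.ne_of_val_ne fun h => by
    have := spos_inj h0b h1b h
    omega
  constructor
  · intro h0
    exact ((hiff q1).2 (Or.inl rfl)) (by rw [h0]; rfl)
  · rw [hammingNorm_eq_card]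
    have hfe : Finset.univ.filter (fun i => toVec a (hh a 3) i ≠ 0) = {q1, q2, q3} := by
      ext i
      simp only [Finset.mem_filter, Finset.mem_univ, true_and, Finset.mem_insert,
        Finset.mem_singleton]
      exact hiff i
    rw [hfe, Finset.card_insert_of_notMem (by simp [hd12, hd13]),
      Finset.card_insert_of_notMem (by simp [hd23]), Finset.card_singleton]

end AuxMinDist

/-- the minimum Hamming distance of the linear code
`S = span_{F_2}(M_a') ⊆ F_2^a` is exactly `3`. -/
theorem min_distance_S_eq_three (a : ℕ) (ha : 3 ≤ a) :
    (∀ v ∈ Ssub a, v ≠ 0 → 3 ≤ hammingNorm v) ∧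
    (∃ v ∈ Ssub a, v ≠ 0 ∧ hammingNorm v = 3) := by
  constructor
  · intro v hv hvne
    obtain ⟨T, hT, hTne, hsum⟩ := span_decomp hv hvne
    rw [← hsum]
    exact norm_ge_three ha T hT hTne
  · obtain ⟨hne, hnorm⟩ := witness_norm ha
    exact ⟨toVec a (hh a 3),
      Submodule.subset_span (Set.mem_image_of_mem _ (Set.mem_image_of_mem _ (three_mem_Ma ha))),
      hne, hnorm⟩
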